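/- Let G be a cubic graph with a Petersen coloring φ: E(G) → E(Petersen). Then G has a Berge–Fulkerson cover: there exist six perfect matchings of G such that every edge of G is contained in exactly two of them. -/

import Mathlib

open Finset

def IsPerfectMatchingFinset {V : Type*} [Fintype V] [DecidableEq V]
    (G : SimpleGraph V) (M : Finset (Sym2 V)) : Prop :=
  (∀ e ∈ M, e ∈ G.edgeSet) ∧ ∀ v : V, (M.filter (fun e => v ∈ e)).card = 1

/-- The Petersen graph as the Kneser graph `K(5,2)`. -/
def petersen : SimpleGraph {s : Finset (Fin 5) // s.card = 2} where
  Adj a b := Disjoint a.1 b.1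
  symm := ⟨fun a b h => h.symm⟩
  loopless := ⟨fun a h => by
    have h2 := a.2
    simp only [disjoint_self] at h
    simp [h] at h2⟩

instance : DecidableRel petersen.Adj :=
  fun a b => inferInstanceAs (Decidable (Disjoint a.1 b.1))

/-- Three edges are mutually adjacent: pairwise distinct and pairwise sharing a
vertex. -/
def MutuallyAdjacent {W : Type*} (e f g : Sym2 W) : Prop :=
  e ≠ f ∧ e ≠ g ∧ f ≠ g ∧ (∃ v, v ∈ e ∧ v ∈ f) ∧ (∃ v, v ∈ e ∧ v ∈ g) ∧
    ∃ v, v ∈ f ∧ v ∈ g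

/-- A Petersen coloring of `G`: a map from edges of `G` to edges of the
Petersen graph sending mutually adjacent triples of edges to mutually adjacent
triples of edges. -/
def IsPetersenColoring {V : Type*} (G : SimpleGraph V)
    (φ : Sym2 V → Sym2 {s : Finset (Fin 5) // s.card = 2}) : Prop :=
  (∀ e ∈ G.edgeSet, φ e ∈ petersen.edgeSet) ∧
    ∀ e ∈ G.edgeSet, ∀ f ∈ G.edgeSet, ∀ g ∈ G.edgeSet,
      MutuallyAdjacent e f g → MutuallyAdjacent (φ e) (φ f) (φ g)

def pv (a b : Fin 5) (h : ({a,b} : Finset (Fin 5)).card = 2 := by decide) :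
    {s : Finset (Fin 5) // s.card = 2} := ⟨{a,b}, h⟩

def PM : Fin 6 → Finset (Sym2 {s : Finset (Fin 5) // s.card = 2})
| 0 => {s(pv 0 1, pv 3 4), s(pv 0 2, pv 1 4), s(pv 1 2, pv 0 3), s(pv 1 3, pv 2 4), s(pv 2 3, pv 0 4)}
| 1 => {s(pv 0 1, pv 3 4), s(pv 0 2, pv 1 3), s(pv 1 2, pv 0 4), s(pv 0 3, pv 2 4), s(pv 2 3, pv 1 4)}
| 2 => {s(pv 0 1, pv 2 4), s(pv 0 2, pv 3 4), s(pv 1 2, pv 0 3), s(pv 1 3, pv 0 4), s(pv 2 3, pv 1 4)}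
| 3 => {s(pv 0 1, pv 2 4), s(pv 0 2, pv 1 3), s(pv 1 2, pv 3 4), s(pv 0 3, pv 1 4), s(pv 2 3, pv 0 4)}
| 4 => {s(pv 0 1, pv 2 3), s(pv 0 2, pv 3 4), s(pv 1 2, pv 0 4), s(pv 0 3, pv 1 4), s(pv 1 3, pv 2 4)}
| 5 => {s(pv 0 1, pv 2 3), s(pv 0 2, pv 1 4), s(pv 1 2, pv 3 4), s(pv 0 3, pv 2 4), s(pv 1 3, pv 0 4)}

lemma tri_free : ∀ a b c : {s : Finset (Fin 5) // s.card = 2},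
    petersen.Adj a b → petersen.Adj a c → petersen.Adj b c → False := by decide

lemma pdeg : ∀ p : {s : Finset (Fin 5) // s.card = 2}, petersen.degree p = 3 := by decide

lemma PM_sub : ∀ i : Fin 6, ∀ e ∈ PM i, e ∈ petersen.edgeSet := by decide

lemma key1 : ∀ (i : Fin 6) (p : {s : Finset (Fin 5) // s.card = 2}),
    ((PM i).filter (fun e => p ∈ e)).card = 1 := by decide

lemma cover2 : ∀ e ∈ petersen.edgeSet,
    (Finset.univ.filter (fun i : Fin 6 => e ∈ PM i)).card = 2 := by decide

lemma star_of_mutually {W : Type*} {H : SimpleGraph W}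
    (htf : ∀ a b c : W, H.Adj a b → H.Adj a c → H.Adj b c → False)
    {e f g : Sym2 W} (he : e ∈ H.edgeSet) (hf : f ∈ H.edgeSet) (hg : g ∈ H.edgeSet)
    (h : MutuallyAdjacent e f g) : ∃ p, p ∈ e ∧ p ∈ f ∧ p ∈ g := by
  obtain ⟨-, -, -, ⟨x, hxe, hxf⟩, ⟨y, hye, hyg⟩, ⟨z, hzf, hzg⟩⟩ := h
  by_cases hxy : x = y
  · exact ⟨x, hxe, hxf, hxy ▸ hyg⟩
  by_cases hxz : x = z
  · exact ⟨x, hxe, hxf, hxz ▸ hzg⟩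
  by_cases hyz : y = z
  · exact ⟨y, hye, hyz ▸ hzf, hyg⟩
  · exfalso
    have he' : e = s(x,y) := (Sym2.mem_and_mem_iff hxy).mp ⟨hxe, hye⟩
    have hf' : f = s(x,z) := (Sym2.mem_and_mem_iff hxz).mp ⟨hxf, hzf⟩
    have hg' : g = s(y,z) := (Sym2.mem_and_mem_iff hyz).mp ⟨hyg, hzg⟩
    rw [he', SimpleGraph.mem_edgeSet] at he
    rw [hf', SimpleGraph.mem_edgeSet] at hf
    rw [hg', SimpleGraph.mem_edgeSet] at hg
    exact htf x y z he hf hg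

lemma mem_inc_iff {W : Type*} (H : SimpleGraph W) [Fintype W] [DecidableEq W]
    [DecidableRel H.Adj] (v : W) (e : Sym2 W) :
    e ∈ H.incidenceFinset v ↔ e ∈ H.edgeSet ∧ v ∈ e := by
  rw [SimpleGraph.mem_incidenceFinset]
  rfl
/-- A cubic graph with a Petersen coloring has a Berge–Fulkerson cover: six
perfect matchings such that every edge lies in exactly two of them. -/
theorem stmt15 {V : Type*} [Fintype V] [DecidableEq V]
    (G : SimpleGraph V) [DecidableRel G.Adj]
    (hcubic : ∀ v : V, G.degree v = 3)
    (φ : Sym2 V → Sym2 {s : Finset (Fin 5) // s.card = 2})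
    (hφ : IsPetersenColoring G φ) :
    ∃ N : Fin 6 → Finset (Sym2 V),
      (∀ i, IsPerfectMatchingFinset G (N i)) ∧
        ∀ e ∈ G.edgeFinset, (Finset.univ.filter fun i => e ∈ N i).card = 2 := by
  classical
  refine ⟨fun i => G.edgeFinset.filter (fun e => φ e ∈ PM i), ?_, ?_⟩
  · intro i
    constructor
    · intro e he
      simp only [Finset.mem_filter, SimpleGraph.mem_edgeFinset] at he
      exact he.1
    · intro v
      -- the three edges at v
      have hT : (G.incidenceFinset v).card = 3 := by
        rw [G.card_incidenceFinset_eq_degree]; exact hcubic v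
      obtain ⟨e, f, g, hef, heg, hfg, hTefg⟩ := Finset.card_eq_three.mp hT
      have hmem : ∀ x ∈ G.incidenceFinset v, x ∈ G.edgeSet ∧ v ∈ x := by
        intro x hx; exact (mem_inc_iff G v x).mp hx
      have heT : e ∈ G.incidenceFinset v := by rw [hTefg]; simp
      have hfT : f ∈ G.incidenceFinset v := by rw [hTefg]; simp
      have hgT : g ∈ G.incidenceFinset v := by rw [hTefg]; simp
      obtain ⟨heE, hev⟩ := hmem e heT
      obtain ⟨hfE, hfv⟩ := hmem f hfT
      obtain ⟨hgE, hgv⟩ := hmem g hgT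
      have hma : MutuallyAdjacent e f g :=
        ⟨hef, heg, hfg, ⟨v, hev, hfv⟩, ⟨v, hev, hgv⟩, ⟨v, hfv, hgv⟩⟩
      have hma' := hφ.2 e heE f hfE g hgE hma
      have hφeE := hφ.1 e heE
      have hφfE := hφ.1 f hfE
      have hφgE := hφ.1 g hgE
      obtain ⟨p, hpe, hpf, hpg⟩ := star_of_mutually tri_free hφeE hφfE hφgE hma'
      obtain ⟨hef', heg', hfg', -⟩ := hma'
      -- the image of the three edges is exactly the incidence set of p
      have hsub : ({φ e, φ f, φ g} : Finset _) ⊆ petersen.incidenceFinset p := by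
        intro x hx
        simp only [Finset.mem_insert, Finset.mem_singleton] at hx
        rcases hx with h | h | h <;> subst h <;> rw [mem_inc_iff]
        · exact ⟨hφeE, hpe⟩
        · exact ⟨hφfE, hpf⟩
        · exact ⟨hφgE, hpg⟩
      have hcard3 : ({φ e, φ f, φ g} : Finset _).card = 3 := by
        rw [Finset.card_insert_of_notMem (by simp [hef', heg']),
          Finset.card_insert_of_notMem (by simp [hfg']), Finset.card_singleton]
      have hpinc : (petersen.incidenceFinset p).card = 3 := by
        rw [petersen.card_incidenceFinset_eq_degree]; exact pdeg p
      have himg : ({φ e, φ f, φ g} : Finset _) = petersen.incidenceFinset p :=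
        Finset.eq_of_subset_of_card_le hsub (by rw [hpinc, hcard3])
      -- rewrite the filter at v
      have hfe : (G.edgeFinset.filter (fun x => φ x ∈ PM i)).filter (fun x => v ∈ x)
          = (G.incidenceFinset v).filter (fun x => φ x ∈ PM i) := by
        ext x
        simp only [Finset.mem_filter, SimpleGraph.mem_edgeFinset, mem_inc_iff]
        tauto
      rw [hfe]
      -- bijection with incidence edges of p
      have hbij : ((G.incidenceFinset v).filter (fun x => φ x ∈ PM i)).card
          = ((petersen.incidenceFinset p).filter (fun x => x ∈ PM i)).card := by
        apply Finset.card_bij (fun a _ => φ a)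
        · intro a ha
          simp only [Finset.mem_filter] at ha ⊢
          refine ⟨?_, ha.2⟩
          rw [← himg]
          have : a ∈ ({e, f, g} : Finset _) := by rw [← hTefg]; exact ha.1
          simp only [Finset.mem_insert, Finset.mem_singleton] at this ⊢
          rcases this with h | h | h <;> subst h <;> tauto
        · intro a ha b hb hab
          simp only [Finset.mem_filter, hTefg, Finset.mem_insert,
            Finset.mem_singleton] at ha hb
          rcases ha.1 with h | h | h <;> rcases hb.1 with h' | h' | h' <;>
            subst h <;> subst h' <;> first
            | rfl
            | (exfalso; first
                | exact hef' hab | exact heg' hab | exact hfg' hab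
                | exact hef' hab.symm | exact heg' hab.symm | exact hfg' hab.symm)
        · intro b hb
          simp only [Finset.mem_filter, ← himg, Finset.mem_insert,
            Finset.mem_singleton] at hb
          obtain ⟨hb1, hb2⟩ := hb
          rcases hb1 with h | h | h
          · exact ⟨e, Finset.mem_filter.mpr ⟨heT, h ▸ hb2⟩, h.symm⟩
          · exact ⟨f, Finset.mem_filter.mpr ⟨hfT, h ▸ hb2⟩, h.symm⟩
          · exact ⟨g, Finset.mem_filter.mpr ⟨hgT, h ▸ hb2⟩, h.symm⟩
      rw [hbij]
      have hinc_eq : (petersen.incidenceFinset p).filter (fun x => x ∈ PM i)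
          = (PM i).filter (fun x => p ∈ x) := by
        ext x
        simp only [Finset.mem_filter, mem_inc_iff]
        constructor
        · rintro ⟨⟨-, h2⟩, h3⟩; exact ⟨h3, h2⟩
        · rintro ⟨h1, h2⟩; exact ⟨⟨PM_sub i x h1, h2⟩, h1⟩
      rw [hinc_eq]
      exact key1 i p
  · intro e he
    have hE : e ∈ G.edgeSet := SimpleGraph.mem_edgeFinset.mp he
    have : (Finset.univ.filter fun i : Fin 6 =>
        e ∈ G.edgeFinset.filter (fun x => φ x ∈ PM i))
        = Finset.univ.filter fun i : Fin 6 => φ e ∈ PM i := by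
      ext i; simp [he]
    rw [this]
    exact cover2 (φ e) (hφ.1 e hE)
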